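/- Let E be a number field that is a finite Galois extension of ℚ, let F be a number field equipped with a ring homomorphism into E (so E is an F-algebra), let n ≥ 1, and let b be a family assigning to each ring homomorphism τ : F →+* E an n-tuple of integers (b^τ_1, …, b^τ_n). For an embedding ι : E →+* ℂ and an integer w, say that b is ι-pure with weight w if for all τ, τ' : F →+* E with ι ∘ τ' = conj ∘ ι ∘ τ one has b^τ_j + b^{τ'}_{n+1−j} = w for all 1 ≤ j ≤ n. Then the following are equivalent: (i) there exist an embedding ι₀ : E →+* ℂ and an integer w such that b is (σ ∘ ι₀)-pure with weight w for every ring automorphism σ of ℂ; (ii) there exists an integer w such that b is (σ ∘ ι)-pure with weight w for every embedding ι : E →+* ℂ and every ring automorphism σ of ℂ; (iii) there exists an integer w such that b is ι-pure with weight w for every embedding ι : E →+* ℂ. -/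

import Mathlib

open Cardinal

/-- Two algebra structures of a small field on algebraically closed fields of equal
uncountable cardinality are related by a ring isomorphism over the base. -/
lemma exists_ringEquiv_algebraMap {E K L : Type u} [Field E] [Field K] [Field L]
    [Algebra E K] [Algebra E L] [IsAlgClosed K] [IsAlgClosed L]
    (hE : #E ≤ ℵ₀) (hK : ℵ₀ < #K) (hKL : #K = #L) :
    ∃ σ : K ≃+* L, ∀ x : E, σ (algebraMap E K x) = algebraMap E L x := by
  obtain ⟨s, hs⟩ := exists_isTranscendenceBasis E (A := K)
  obtain ⟨t, ht⟩ := exists_isTranscendenceBasis E (A := L)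
  have h1 : #K = #s :=
    by simpa using IsAlgClosed.cardinal_eq_cardinal_transcendence_basis_of_aleph0_lt _ hs hE hK
  have h2 : #L = #t :=
    by simpa using IsAlgClosed.cardinal_eq_cardinal_transcendence_basis_of_aleph0_lt _ ht hE (hKL ▸ hK)
  obtain ⟨e⟩ := Cardinal.eq.1 (h1.symm.trans (hKL.trans h2))
  let S := Algebra.adjoin E (Set.range ((↑) : s → K))
  let T := Algebra.adjoin E (Set.range ((↑) : t → L))
  let φ : S ≃ₐ[E] T :=
    hs.1.aevalEquiv.symm.trans ((MvPolynomial.renameEquiv E e).trans ht.1.aevalEquiv)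
  letI := IsAlgClosed.isAlgClosure_of_transcendence_basis _ hs
  letI := IsAlgClosed.isAlgClosure_of_transcendence_basis _ ht
  refine ⟨IsAlgClosure.equivOfEquiv K L φ.toRingEquiv, fun x => ?_⟩
  rw [IsScalarTower.algebraMap_apply E S K x, IsAlgClosure.equivOfEquiv_algebraMap]
  have hφ : φ.toRingEquiv (algebraMap E S x) = algebraMap E T x := φ.commutes x
  rw [hφ, ← IsScalarTower.algebraMap_apply]

/-- Any two embeddings of a countable field into `ℂ` differ by an automorphism of `ℂ`. -/
lemma exists_ringEquiv_comp {E : Type} [Field E] (hE : #E ≤ ℵ₀) (ι₀ ι : E →+* ℂ) :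
    ∃ σ : ℂ ≃+* ℂ, σ.toRingHom.comp ι₀ = ι := by
  obtain ⟨σ, hσ⟩ := @exists_ringEquiv_algebraMap E ℂ ℂ _ _ _ ι₀.toAlgebra ι.toAlgebra _ _
    hE (by rw [mk_complex]; exact aleph0_lt_continuum) rfl
  exact ⟨σ, RingHom.ext hσ⟩

/-- Any two embeddings of a number field into `ℂ` differ by an automorphism of `ℂ`. -/
lemma exists_ringEquiv_comp' (E : Type*) [Field E] [NumberField E] (ι₀ ι : E →+* ℂ) :
    ∃ σ : ℂ ≃+* ℂ, σ.toRingHom.comp ι₀ = ι := by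
  have hc : Countable E :=
    Countable.of_equiv _ (Module.finBasis ℚ E).equivFun.toEquiv.symm
  set K₀ := ι₀.fieldRange
  have hinj : Function.Injective ι₀.rangeRestrictField := fun a b h => by
    apply ι₀.injective
    rw [← ι₀.coe_rangeRestrictField a, ← ι₀.coe_rangeRestrictField b, h]
  have hsurj : Function.Surjective ι₀.rangeRestrictField := by
    rintro ⟨y, hy⟩
    obtain ⟨x, rfl⟩ := hy
    exact ⟨x, rfl⟩
  let e : E ≃+* K₀ := RingEquiv.ofBijective ι₀.rangeRestrictField ⟨hinj, hsurj⟩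
  have hcK : Countable K₀ := Countable.of_equiv E e.toEquiv
  obtain ⟨σ, hσ⟩ := exists_ringEquiv_comp (E := K₀) Cardinal.mk_le_aleph0
    K₀.subtype (ι.comp e.symm.toRingHom)
  refine ⟨σ, RingHom.ext fun x => ?_⟩
  have h1 : (ι₀ x : ℂ) = K₀.subtype (e x) := (ι₀.coe_rangeRestrictField x).symm
  have h2 := RingHom.congr_fun hσ (e x)
  simp only [RingHom.comp_apply] at h2 ⊢
  rw [h1, h2]
  exact congrArg ι (e.symm_apply_apply x)

/-- `b` is `ι`-pure with purity weight `w`: for embeddings `τ, τ' : F →+* E`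
with `ι ∘ τ' = conj ∘ ι ∘ τ` one has `b τ j + b τ' (n+1−j) = w` for all
`1 ≤ j ≤ n`. -/
def IsIotaPure (F E : Type*) [Field F] [Field E] (n : ℕ)
    (b : (F →+* E) → ℕ → ℤ) (ι : E →+* ℂ) (w : ℤ) : Prop :=
  ∀ τ τ' : F →+* E, ι.comp τ' = (starRingEnd ℂ).comp (ι.comp τ) →
    ∀ j, 1 ≤ j → j ≤ n → b τ j + b τ' (n + 1 - j) = w

/-- characterizations of strongly-pure weights over the
coefficient field `E` (Proposition 3.1 of the paper), with `Gal(ℚ̄/ℚ)`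
replaced by the group of ring automorphisms of `ℂ` acting by
post-composition. -/
theorem strongly_pure_characterizations
    (E : Type*) [Field E] [NumberField E] [IsGalois ℚ E]
    (F : Type*) [Field F] [NumberField F] [Algebra F E]
    (n : ℕ) (hn : 1 ≤ n)
    (b : (F →+* E) → ℕ → ℤ) :
    ((∃ ι₀ : E →+* ℂ, ∃ w : ℤ, ∀ σ : ℂ ≃+* ℂ,
        IsIotaPure F E n b (σ.toRingHom.comp ι₀) w)
      ↔
      (∃ w : ℤ, ∀ ι : E →+* ℂ, ∀ σ : ℂ ≃+* ℂ,
        IsIotaPure F E n b (σ.toRingHom.comp ι) w))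
    ∧
    ((∃ w : ℤ, ∀ ι : E →+* ℂ, ∀ σ : ℂ ≃+* ℂ,
        IsIotaPure F E n b (σ.toRingHom.comp ι) w)
      ↔
      (∃ w : ℤ, ∀ ι : E →+* ℂ, IsIotaPure F E n b ι w)) := by
  constructor
  · constructor
    · rintro ⟨ι₀, w, h⟩
      refine ⟨w, fun ι σ => ?_⟩
      obtain ⟨σ', hσ'⟩ := exists_ringEquiv_comp' E ι₀ (σ.toRingHom.comp ι)
      rw [← hσ']
      exact h σ'
    · rintro ⟨w, h⟩
      exact ⟨Classical.arbitrary _, w, fun σ => h _ σ⟩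
  · constructor
    · rintro ⟨w, h⟩
      refine ⟨w, fun ι => ?_⟩
      have h1 : (RingEquiv.refl ℂ).toRingHom.comp ι = ι := RingHom.ext fun x => rfl
      have := h ι (RingEquiv.refl ℂ)
      rwa [h1] at this
    · rintro ⟨w, h⟩
      exact ⟨w, fun ι σ => h _⟩
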